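/- arXiv:1807.00615 — 4 statements merged into one kernel-verified Lean document; each statement's English description precedes it below -/
import Mathlib

section
/- Let b > 0, q > 0, m ≥ 1 an integer, T ≥ 0 and ζ* > 0 with ζ*T < 1 (the upper limit 1/T being +∞ when T = 0). Set C = b + mT, C* = m(1/ζ* − T)/C and S* = C*/(1 + C*). Then (m^m/Γ(m)) ∫₀^∞ ∫_{ζ*}^{1/T} λ^{q+m−1} e^{−λ(b + m/y)} y^{−2} (1/y − T)^{m−1} dy dλ = (Γ(q+m)/(Γ(m) C^q)) ∫₀^{S*} u^{m−1} (1−u)^{q−1} du; equivalently, the double integral equals (Γ(q)/C^q)·I_{S*}(m, q). -/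
open MeasureTheory Real

/-- The regularized incomplete beta function `I_x(α, β)`, with `I_x(α, β) = 0` for `x ≤ 0`. -/
noncomputable def regIncBeta (x α β : ℝ) : ℝ :=
  if x ≤ 0 then 0
  else (∫ u in (0:ℝ)..x, u ^ (α - 1) * (1 - u) ^ (β - 1)) /
    (Real.Gamma α * Real.Gamma β / Real.Gamma (α + β))

set_option maxHeartbeats 2000000 in
/-- Evaluation of the double integral `R_{l,j,m}`: for `b > 0`, `q > 0`,
an integer `m ≥ 1`, `T ≥ 0` and `ζ* > 0` with `ζ*T < 1`, setting `C = b + mT`,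
`C* = m(1/ζ* − T)/C` and `S* = C*/(1 + C*)`,
`(m^m/Γ(m)) ∫₀^∞ ∫_{ζ*}^{1/T} λ^{q+m−1} e^{−λ(b+m/y)} y^{−2} (1/y − T)^{m−1} dy dλ
  = (Γ(q+m)/(Γ(m) C^q)) B_{S*}(m, q) = (Γ(q)/C^q) I_{S*}(m, q)`,
where the region `(ζ*, 1/T)` is `{y | ζ* < y ∧ yT < 1}` (all of `(ζ*, ∞)` when `T = 0`). -/
theorem Rterm_eval (b q T ζstar : ℝ) (m : ℕ) (hb : 0 < b) (hq : 0 < q) (hm : 1 ≤ m)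
    (hT : 0 ≤ T) (hζ : 0 < ζstar) (hζT : ζstar * T < 1) :
    (((m : ℝ) ^ m / Real.Gamma m) *
        ∫ l in Set.Ioi (0:ℝ), ∫ y in {y : ℝ | ζstar < y ∧ y * T < 1},
          l ^ (q + m - 1) * Real.exp (-(l * (b + m / y))) * (1 / y ^ 2)
            * (1 / y - T) ^ ((m : ℝ) - 1))
      = (Real.Gamma (q + m) / (Real.Gamma m * (b + m * T) ^ q)) *
          ∫ u in (0:ℝ)..((((m : ℝ) * (1 / ζstar - T) / (b + m * T)))
              / (1 + (m : ℝ) * (1 / ζstar - T) / (b + m * T))),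
            u ^ ((m : ℝ) - 1) * (1 - u) ^ (q - 1)
    ∧ (((m : ℝ) ^ m / Real.Gamma m) *
        ∫ l in Set.Ioi (0:ℝ), ∫ y in {y : ℝ | ζstar < y ∧ y * T < 1},
          l ^ (q + m - 1) * Real.exp (-(l * (b + m / y))) * (1 / y ^ 2)
            * (1 / y - T) ^ ((m : ℝ) - 1))
      = (Real.Gamma q / (b + m * T) ^ q) *
          regIncBeta ((((m : ℝ) * (1 / ζstar - T) / (b + m * T)))
              / (1 + (m : ℝ) * (1 / ζstar - T) / (b + m * T))) (m : ℝ) q := by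
  open Set in
  have hm0 : (0:ℝ) < m := by exact_mod_cast hm
  have hm1 : (1:ℝ) ≤ m := by exact_mod_cast hm
  have hts : 0 < 1/ζstar - T := by
    have : T < 1/ζstar := by rw [lt_div_iff₀ hζ]; linarith [mul_comm ζstar T]
    linarith
  set ts := 1/ζstar - T with hts_def
  set C := b + (m:ℝ) * T with hC_def
  have hC : 0 < C := by
    rw [hC_def]; have : 0 ≤ (m:ℝ) * T := by positivity
    linarith
  have hden : 0 < C + (m:ℝ)*ts := by nlinarith
  set SS := (m:ℝ)*ts/(C + (m:ℝ)*ts) with hSS_def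
  have hSs0 : 0 < SS := div_pos (mul_pos hm0 hts) hden
  have hSs1 : SS < 1 := by rw [hSS_def, div_lt_one hden]; nlinarith
  have hSeq : ((m:ℝ) * ts / C) / (1 + (m:ℝ) * ts / C) = SS := by
    rw [hSS_def]; field_simp
  rw [hSeq]
  clear_value ts C SS
  -- Step A: change of variables y = (t+T)⁻¹ in the inner integral
  have hA : ∀ l : ℝ, (∫ y in {y : ℝ | ζstar < y ∧ y * T < 1},
        l ^ (q + m - 1) * Real.exp (-(l * (b + m / y))) * (1 / y ^ 2)
          * (1 / y - T) ^ ((m : ℝ) - 1))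
      = ∫ t in Ioo (0:ℝ) ts,
          l ^ (q + (m:ℝ) - 1) * Real.exp (-(l * (C + m * t))) * t ^ ((m : ℝ) - 1) := by
    intro l
    have himg : (fun t : ℝ => (t + T)⁻¹) '' Ioo 0 ts = {y : ℝ | ζstar < y ∧ y * T < 1} := by
      ext y
      simp only [mem_image, mem_Ioo, mem_setOf_eq]
      constructor
      · rintro ⟨t, ⟨ht0, hts'⟩, rfl⟩
        have htT : 0 < t + T := by linarith
        constructor
        · have h1 : t + T < 1/ζstar := by rw [hts_def] at hts'; linarith
          have h2 : (1/ζstar)⁻¹ < (t+T)⁻¹ := inv_strictAnti₀ htT h1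
          simpa using h2
        · rw [inv_mul_lt_iff₀ htT]; linarith
      · rintro ⟨hy1, hy2⟩
        have hy0 : 0 < y := hζ.trans hy1
        refine ⟨1/y - T, ⟨?_, ?_⟩, ?_⟩
        · have : T < 1/y := by rw [lt_div_iff₀ hy0]; linarith [mul_comm y T]
          linarith
        · have : 1/y < 1/ζstar := one_div_lt_one_div_of_lt hζ hy1
          rw [hts_def]; linarith
        · field_simp
          ring
    have hderiv : ∀ t ∈ Ioo (0:ℝ) ts, HasDerivWithinAt (fun t : ℝ => (t + T)⁻¹)
        (-1 / (t + T)^2) (Ioo 0 ts) t := by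
      intro t ht
      have htT : t + T ≠ 0 := by nlinarith [ht.1]
      have h1 : HasDerivAt (fun t : ℝ => t + T) 1 t := (hasDerivAt_id t).add_const T
      have := h1.inv htT
      exact this.hasDerivWithinAt
    have hinj : InjOn (fun t : ℝ => (t + T)⁻¹) (Ioo 0 ts) := by
      intro a _ b _ h
      have := inv_injective h
      linarith [this]
    rw [← himg, integral_image_eq_integral_abs_deriv_smul measurableSet_Ioo hderiv hinj]
    refine setIntegral_congr_fun measurableSet_Ioo (fun t ht => ?_)
    have htT : 0 < t + T := by linarith [ht.1]
    have h2 : (t+T)^2 ≠ 0 := by positivity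
    rw [smul_eq_mul]
    have e1 : (1:ℝ) / (t+T)⁻¹ - T = t := by field_simp; ring
    have e2 : b + (m:ℝ) / (t + T)⁻¹ = C + m * t := by
      rw [div_eq_mul_inv, inv_inv, hC_def]; ring
    have e3 : (1:ℝ) / ((t+T)⁻¹)^2 = (t+T)^2 := by rw [one_div, ← inv_pow, inv_inv]
    rw [e1, e2, e3, abs_div, abs_neg, abs_one, abs_of_pos (by positivity : (0:ℝ) < (t+T)^2)]
    field_simp
  -- Step B/C: Fubini and the Gamma integral in l
  have hB : (∫ l in Ioi (0:ℝ), ∫ t in Ioo (0:ℝ) ts,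
        l ^ (q + (m:ℝ) - 1) * Real.exp (-(l * (C + m * t))) * t ^ ((m : ℝ) - 1))
      = ∫ t in Ioo (0:ℝ) ts,
          ((C + (m:ℝ)*t) ^ (-(q+(m:ℝ))) * Real.Gamma (q+(m:ℝ))) * t ^ ((m:ℝ)-1) := by
    have hf1 : IntegrableOn (fun l : ℝ => l ^ (q + (m:ℝ) - 1) * Real.exp (-(C * l))) (Ioi 0) := by
      have h := integrableOn_rpow_mul_exp_neg_mul_rpow (s := q + (m:ℝ) - 1) (p := 1)
        (by linarith : (-1:ℝ) < q + (m:ℝ) - 1) one_pos hC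
      refine h.congr_fun (fun x hx => ?_) measurableSet_Ioi
      simp only [Real.rpow_one, pow_one]; ring_nf
    have hint : Integrable (Function.uncurry fun l t =>
        l ^ (q + (m:ℝ) - 1) * Real.exp (-(l * (C + m * t))) * t ^ ((m : ℝ) - 1))
        ((volume.restrict (Ioi (0:ℝ))).prod (volume.restrict (Ioo (0:ℝ) ts))) := by
      rw [Measure.prod_restrict]
      have hbd : IntegrableOn (fun p : ℝ × ℝ =>
          (p.1 ^ (q + (m:ℝ) - 1) * Real.exp (-(C * p.1))) * ts ^ ((m:ℝ) - 1))
          (Ioi (0:ℝ) ×ˢ Ioo (0:ℝ) ts) := by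
        rw [IntegrableOn, Measure.volume_eq_prod, ← Measure.prod_restrict]
        exact hf1.mul_prod (integrable_const _)
      refine hbd.mono' ?_ ?_
      · apply Measurable.aestronglyMeasurable
        fun_prop
      · filter_upwards [ae_restrict_mem (measurableSet_Ioi.prod measurableSet_Ioo)] with p hp
        obtain ⟨hp1, hp2⟩ := hp
        simp only [Function.uncurry]
        have hx : 0 < p.1 := hp1
        have hy : 0 < p.2 := hp2.1
        have h3 : (0:ℝ) ≤ p.1 ^ (q + (m:ℝ) - 1) := Real.rpow_nonneg hx.le _
        have h4 : (0:ℝ) ≤ p.2 ^ ((m:ℝ) - 1) := Real.rpow_nonneg hy.le _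
        rw [Real.norm_eq_abs, abs_of_nonneg (mul_nonneg (mul_nonneg h3 (Real.exp_nonneg _)) h4)]
        have h1 : Real.exp (-(p.1 * (C + ↑m * p.2))) ≤ Real.exp (-(C * p.1)) := by
          apply Real.exp_le_exp.mpr
          nlinarith [mul_nonneg hx.le (mul_nonneg hm0.le hy.le)]
        have h2 : p.2 ^ ((m:ℝ) - 1) ≤ ts ^ ((m:ℝ) - 1) :=
          Real.rpow_le_rpow hp2.1.le hp2.2.le (by linarith)
        exact mul_le_mul (mul_le_mul_of_nonneg_left h1 h3) h2 h4
          (mul_nonneg h3 (Real.exp_nonneg _))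
    rw [integral_integral_swap hint]
    refine setIntegral_congr_fun measurableSet_Ioo (fun t ht => ?_)
    have hb' : 0 < C + (m:ℝ) * t := by nlinarith [ht.1]
    rw [MeasureTheory.integral_mul_const]
    congr 1
    have h := integral_rpow_mul_exp_neg_mul_rpow (p := 1) (q := q + (m:ℝ) - 1)
      (b := C + (m:ℝ)*t) one_pos (by linarith) hb'
    simp only [Real.rpow_one, div_one, mul_one] at h
    rw [show q + (m:ℝ) - 1 + 1 = q + (m:ℝ) by ring] at h
    rw [← h]
    refine setIntegral_congr_fun measurableSet_Ioi (fun x hx => ?_)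
    ring_nf
  -- Step D: change of variables t = Cu/(m(1-u))
  have hD : (∫ t in Ioo (0:ℝ) ts,
        ((C + (m:ℝ)*t) ^ (-(q+(m:ℝ))) * Real.Gamma (q+(m:ℝ))) * t ^ ((m:ℝ)-1))
      = ∫ u in Ioo (0:ℝ) SS,
          (Real.Gamma (q+(m:ℝ)) / ((m:ℝ)^m * C ^ q)) * (u ^ ((m:ℝ)-1) * (1-u) ^ (q-1)) := by
    have himg : (fun u : ℝ => C*u/((m:ℝ)*(1-u))) '' Ioo 0 SS = Ioo 0 ts := by
      ext t
      simp only [mem_image, mem_Ioo]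
      constructor
      · rintro ⟨u, ⟨hu0, hu1⟩, rfl⟩
        have hu1' : u < 1 := hu1.trans hSs1
        have hv : 0 < 1 - u := by linarith
        constructor
        · exact div_pos (mul_pos hC hu0) (mul_pos hm0 hv)
        · rw [div_lt_iff₀ (mul_pos hm0 hv)]
          rw [hSS_def, lt_div_iff₀ hden] at hu1
          nlinarith
      · rintro ⟨ht0, hts'⟩
        have hdt : 0 < C + (m:ℝ)*t := by nlinarith
        refine ⟨(m:ℝ)*t/(C + (m:ℝ)*t), ⟨div_pos (mul_pos hm0 ht0) hdt, ?_⟩, ?_⟩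
        · rw [hSS_def, div_lt_div_iff₀ hdt hden]
          nlinarith [mul_pos hm0 hC]
        · have h1 : (1:ℝ) - (m:ℝ)*t/(C + (m:ℝ)*t) = C / (C + (m:ℝ)*t) := by
            field_simp; ring
          rw [h1]
          field_simp
    have hderiv : ∀ u ∈ Ioo (0:ℝ) SS, HasDerivWithinAt (fun u : ℝ => C*u/((m:ℝ)*(1-u)))
        (C / ((m:ℝ)*(1-u)^2)) (Ioo 0 SS) u := by
      intro u hu
      have hv : 0 < 1 - u := by linarith [hu.2.trans hSs1]
      have hne : (m:ℝ)*(1-u) ≠ 0 := by positivity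
      have hnum : HasDerivAt (fun u : ℝ => C*u) C u := by
        simpa using (hasDerivAt_id u).const_mul C
      have hden' : HasDerivAt (fun u : ℝ => (m:ℝ)*(1-u)) ((m:ℝ) * (-1)) u :=
        ((hasDerivAt_id u).const_sub 1).const_mul (m:ℝ)
      have h := hnum.div hden' hne
      have heq : (C * ((m:ℝ)*(1-u)) - C*u*((m:ℝ) * (-1))) / ((m:ℝ)*(1-u))^2
          = C / ((m:ℝ)*(1-u)^2) := by
        field_simp
        ring
      rw [heq] at h
      exact h.hasDerivWithinAt
    have hinj : InjOn (fun u : ℝ => C*u/((m:ℝ)*(1-u))) (Ioo 0 SS) := by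
      intro a ha b' hb' h
      simp only at h
      have ha1 : a < 1 := ha.2.trans hSs1
      have hb1 : b' < 1 := hb'.2.trans hSs1
      rw [div_eq_div_iff (mul_pos hm0 (sub_pos.mpr ha1)).ne'
        (mul_pos hm0 (sub_pos.mpr hb1)).ne'] at h
      have h2 : C * (m:ℝ) * a = C * (m:ℝ) * b' := by linear_combination h
      exact mul_left_cancel₀ (by positivity) h2
    rw [← himg, integral_image_eq_integral_abs_deriv_smul measurableSet_Ioo hderiv hinj]
    refine setIntegral_congr_fun measurableSet_Ioo (fun u hu => ?_)
    have hu0 : 0 < u := hu.1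
    have hv : 0 < 1 - u := by linarith [hu.2.trans hSs1]
    rw [smul_eq_mul, abs_of_pos (by positivity)]
    have e1 : C + (m:ℝ) * (C*u/((m:ℝ)*(1-u))) = C / (1-u) := by field_simp; ring
    have e2 : (C / (1-u)) ^ (-(q+(m:ℝ))) = C ^ (-(q+(m:ℝ))) * (1-u) ^ (q+(m:ℝ)) := by
      rw [Real.div_rpow hC.le hv.le, Real.rpow_neg hv.le, div_eq_mul_inv, inv_inv]
    have e3 : (C*u/((m:ℝ)*(1-u))) ^ ((m:ℝ)-1)
        = C ^ ((m:ℝ)-1) * u ^ ((m:ℝ)-1) / ((m:ℝ) ^ ((m:ℝ)-1) * (1-u) ^ ((m:ℝ)-1)) := by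
      rw [Real.div_rpow (by positivity) (by positivity),
        Real.mul_rpow hC.le hu0.le, Real.mul_rpow hm0.le hv.le]
    rw [e1, e2, e3]
    have i1 : C * C ^ (-(q+(m:ℝ))) * C ^ ((m:ℝ)-1) = C ^ (-q) := by
      nth_rewrite 1 [← Real.rpow_one C]
      rw [← Real.rpow_add hC, ← Real.rpow_add hC]
      congr 1; ring
    have i2 : (1-u) ^ (q+(m:ℝ)) / ((1-u)^2 * (1-u) ^ ((m:ℝ)-1)) = (1-u) ^ (q-1) := by
      rw [← Real.rpow_natCast (1-u) 2, ← Real.rpow_add hv, ← Real.rpow_sub hv]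
      congr 1; push_cast; ring
    have i3 : (m:ℝ) * (m:ℝ) ^ ((m:ℝ)-1) = (m:ℝ) ^ (m:ℕ) := by
      rw [← Real.rpow_natCast (m:ℝ) m]
      nth_rewrite 1 [← Real.rpow_one (m:ℝ)]
      rw [← Real.rpow_add hm0]
      congr 1; ring
    have h1 : (0:ℝ) < (m:ℝ) ^ ((m:ℝ)-1) := Real.rpow_pos_of_pos hm0 _
    have h2 : (0:ℝ) < (1-u) ^ ((m:ℝ)-1) := Real.rpow_pos_of_pos hv _
    have hCq' : (0:ℝ) < C ^ q := Real.rpow_pos_of_pos hC _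
    have hmmpos : (0:ℝ) < (m:ℝ) ^ (m:ℕ) := by positivity
    calc C / (↑m * (1-u)^2) * (C ^ (-(q+(m:ℝ))) * ((1-u) ^ (q+(m:ℝ))) * Real.Gamma (q+(m:ℝ))
          * (C ^ ((m:ℝ)-1) * u ^ ((m:ℝ)-1) / ((m:ℝ) ^ ((m:ℝ)-1) * (1-u) ^ ((m:ℝ)-1))))
        = Real.Gamma (q+(m:ℝ)) * u ^ ((m:ℝ)-1) * ((C * C ^ (-(q+(m:ℝ))) * C ^ ((m:ℝ)-1))
            * ((1-u) ^ (q+(m:ℝ)) / ((1-u)^2 * (1-u) ^ ((m:ℝ)-1)))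
            * (1 / ((m:ℝ) * (m:ℝ) ^ ((m:ℝ)-1)))) := by
          field_simp
      _ = Real.Gamma (q+(m:ℝ)) * u ^ ((m:ℝ)-1) * (C ^ (-q) * (1-u) ^ (q-1)
            * (1 / ((m:ℝ) ^ (m:ℕ)))) := by rw [i1, i2, i3]
      _ = Real.Gamma (q+(m:ℝ)) / ((m:ℝ)^m * C ^ q) * (u ^ ((m:ℝ)-1) * (1-u) ^ (q-1)) := by
          rw [Real.rpow_neg hC.le]
          field_simp
  -- assemble
  have hGm : (0:ℝ) < Real.Gamma m := Real.Gamma_pos_of_pos hm0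
  have hGq : (0:ℝ) < Real.Gamma q := Real.Gamma_pos_of_pos hq
  have hCq' : (0:ℝ) < C ^ q := Real.rpow_pos_of_pos hC _
  have hmmpos : (0:ℝ) < (m:ℝ) ^ (m:ℕ) := by positivity
  have hI : (∫ l in Ioi (0:ℝ), ∫ y in {y : ℝ | ζstar < y ∧ y * T < 1},
        l ^ (q + m - 1) * Real.exp (-(l * (b + m / y))) * (1 / y ^ 2)
          * (1 / y - T) ^ ((m : ℝ) - 1))
      = (Real.Gamma (q+(m:ℝ)) / ((m:ℝ)^m * C ^ q)) *
          ∫ u in (0:ℝ)..SS, u ^ ((m:ℝ)-1) * (1-u) ^ (q-1) := by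
    simp only [hA]
    rw [hB, hD, MeasureTheory.integral_const_mul,
      intervalIntegral.integral_of_le hSs0.le, integral_Ioc_eq_integral_Ioo]
  have hmain : ((m : ℝ) ^ m / Real.Gamma m) *
      (∫ l in Ioi (0:ℝ), ∫ y in {y : ℝ | ζstar < y ∧ y * T < 1},
        l ^ (q + m - 1) * Real.exp (-(l * (b + m / y))) * (1 / y ^ 2)
          * (1 / y - T) ^ ((m : ℝ) - 1))
      = (Real.Gamma (q + m) / (Real.Gamma m * C ^ q)) *
          ∫ u in (0:ℝ)..SS, u ^ ((m:ℝ)-1) * (1-u) ^ (q-1) := by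
    rw [hI]
    field_simp
  refine ⟨hmain, ?_⟩
  rw [hmain, regIncBeta, if_neg (not_le.mpr hSs0)]
  have hGmq : (0:ℝ) < Real.Gamma ((m:ℝ) + q) := Real.Gamma_pos_of_pos (by linarith)
  rw [show q + (m:ℝ) = (m:ℝ) + q by ring]
  field_simp
end

section
/- Let 1 ≤ r ≤ n be integers, τ > 0, and let X₁,…,Xₙ be i.i.d. Exponential(λ) random variables with N = #{i : Xᵢ ≤ τ}. Then ∫₀^∞ π(λ; a, b) E_λ[min(N, r)] dλ = ∑_{m=1}^{r−1} ∑_{j=0}^{m} m C(n,m) C(m,j) (−1)^j b^a/(b+(n−m+j)τ)^a + ∑_{k=r}^{n} ∑_{j=0}^{k} r C(n,k) C(k,j) (−1)^j b^a/(b+(n−k+j)τ)^a. -/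
open MeasureTheory ProbabilityTheory Real Finset

/-- The Gamma(α, β) density. -/
noncomputable def gammaPdf (α β t : ℝ) : ℝ :=
  if 0 < t then β ^ α * t ^ (α - 1) * Real.exp (-β * t) / Real.Gamma α else 0

lemma gamma_exp_eq {a b c : ℝ} {l : ℝ} (hl : 0 < l) :
    gammaPdf a b l * Real.exp (-(c * l))
      = b ^ a / Real.Gamma a * (l ^ (a - 1) * Real.exp (-((b + c) * l))) := by
  simp only [gammaPdf, if_pos hl]
  rw [show -((b + c) * l) = -b * l + -(c * l) by ring, Real.exp_add]
  ring

lemma integrableOn_gamma_exp {a b c : ℝ} (ha : 0 < a) (hb : 0 < b) (hc : 0 ≤ c) :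
    IntegrableOn (fun l : ℝ => gammaPdf a b l * Real.exp (-(c * l))) (Set.Ioi 0) := by
  have h0 : IntegrableOn (fun l : ℝ => l ^ (a - 1) * Real.exp (-(b + c) * l ^ (1:ℝ)))
      (Set.Ioi 0) :=
    integrableOn_rpow_mul_exp_neg_mul_rpow (by linarith) zero_lt_one (by linarith)
  have h1 : IntegrableOn (fun l : ℝ => l ^ (a - 1) * Real.exp (-((b + c) * l)))
      (Set.Ioi 0) := by
    refine h0.congr_fun (fun l hl => ?_) measurableSet_Ioi
    simp only [Real.rpow_one]; ring_nf
  exact IntegrableOn.congr_fun (s := Set.Ioi 0) (h1.const_mul (b ^ a / Real.Gamma a))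
    (fun l hl => (gamma_exp_eq hl).symm) measurableSet_Ioi

lemma integral_gamma_exp {a b c : ℝ} (ha : 0 < a) (hb : 0 < b) (hc : 0 ≤ c) :
    ∫ l in Set.Ioi (0:ℝ), gammaPdf a b l * Real.exp (-(c * l)) = b ^ a / (b + c) ^ a := by
  have hbc : 0 < b + c := by linarith
  rw [setIntegral_congr_fun measurableSet_Ioi (fun l hl => gamma_exp_eq (c := c) hl),
    integral_const_mul, Real.integral_rpow_mul_exp_neg_mul_Ioi ha hbc]
  rw [one_div, Real.inv_rpow hbc.le]
  have hΓ : Real.Gamma a ≠ 0 := (Real.Gamma_pos_of_pos ha).ne'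
  field_simp

lemma expand_term (c q : ℝ) (n m : ℕ) :
    c * (1 - q) ^ m * q ^ (n - m)
      = ∑ j ∈ range (m + 1), c * (m.choose j : ℝ) * (-1) ^ j * q ^ (n - m + j) := by
  have h : (1 - q) ^ m = ∑ j ∈ range (m + 1), (-1 : ℝ) ^ j * q ^ j * (m.choose j : ℝ) := by
    rw [show (1 - q : ℝ) = -q + 1 by ring, add_pow]
    refine Finset.sum_congr rfl fun j hj => ?_
    rw [neg_pow]; ring
  rw [h, Finset.mul_sum, Finset.sum_mul]
  refine Finset.sum_congr rfl fun j hj => ?_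
  rw [pow_add]; ring

lemma alg_split {n r : ℕ} (hr : 1 ≤ r) (hrn : r ≤ n) (q : ℝ) :
    ∑ m ∈ range (n + 1), ((min m r : ℕ) : ℝ) * (n.choose m : ℝ) * (1 - q) ^ m * q ^ (n - m)
      = (∑ m ∈ Icc 1 (r - 1), ∑ j ∈ range (m + 1),
          (m : ℝ) * (n.choose m : ℝ) * (m.choose j : ℝ) * (-1 : ℝ) ^ j * q ^ (n - m + j))
        + ∑ k ∈ Icc r n, ∑ j ∈ range (k + 1),
            (r : ℝ) * (n.choose k : ℝ) * (k.choose j : ℝ) * (-1 : ℝ) ^ j * q ^ (n - k + j) := by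
  have h1 : Icc 1 (r - 1) = Ico 1 r := by
    rw [← Finset.Ico_add_one_right_eq_Icc]; congr 1; omega
  have h2 : Icc r n = Ico r (n + 1) := (Finset.Ico_add_one_right_eq_Icc r n).symm
  rw [h1, h2, range_eq_Ico, ← Finset.sum_Ico_consecutive _ (Nat.zero_le r) (by omega),
    Finset.sum_eq_sum_Ico_succ_bot (by omega : 0 < r),
    show ((min 0 r : ℕ) : ℝ) = 0 by simp, zero_mul, zero_mul, zero_mul, zero_add]
  congr 1
  · refine Finset.sum_congr rfl fun m hm => ?_
    rw [Finset.mem_Ico] at hm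
    rw [show min m r = m from min_eq_left (by omega),
      expand_term ((m : ℝ) * (n.choose m : ℝ)) q n m]
  · refine Finset.sum_congr rfl fun k hk => ?_
    rw [Finset.mem_Ico] at hk
    rw [show min k r = r from min_eq_right (by omega),
      expand_term ((r : ℝ) * (n.choose k : ℝ)) q n k]

lemma expectation_min_eq {Ω : Type*} [MeasurableSpace Ω] (P : Measure Ω)
    [IsProbabilityMeasure P] {n : ℕ} (X : Fin n → Ω → ℝ)
    (hindep : iIndepFun X P)
    (hAE : ∀ i, AEMeasurable (X i) P)
    (τ p q : ℝ)
    (hp : ∀ i, (P (X i ⁻¹' Set.Iic τ)).toReal = p)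
    (hq : ∀ i, (P (X i ⁻¹' Set.Ioi τ)).toReal = q) (r : ℕ) :
    ∫ ω, ((min ((univ.filter fun i => X i ω ≤ τ)).card r : ℕ) : ℝ) ∂P
      = ∑ m ∈ range (n + 1),
          ((min m r : ℕ) : ℝ) * (n.choose m : ℝ) * p ^ m * q ^ (n - m) := by
  classical
  set E : Finset (Fin n) → Set Ω :=
    fun S => ⋂ i ∈ (univ : Finset (Fin n)),
      X i ⁻¹' (if i ∈ S then Set.Iic τ else Set.Ioi τ) with hE
  -- membership characterization
  have mem_E : ∀ (S : Finset (Fin n)) (ω : Ω),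
      ω ∈ E S ↔ (univ.filter fun i => X i ω ≤ τ) = S := by
    intro S ω
    simp only [hE, Set.mem_iInter, Set.mem_preimage, Finset.mem_univ, forall_true_left]
    constructor
    · intro h
      ext i
      simp only [Finset.mem_filter, Finset.mem_univ, true_and]
      constructor
      · intro hi
        by_contra hne
        have := h i
        rw [if_neg hne] at this
        exact absurd hi (not_le.mpr this)
      · intro hi
        have := h i
        rwa [if_pos hi] at this
    · intro h i
      by_cases hi : i ∈ S
      · rw [if_pos hi]
        have : i ∈ univ.filter fun i => X i ω ≤ τ := h ▸ hi
        simpa using this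
      · rw [if_neg hi]
        have : i ∉ univ.filter fun i => X i ω ≤ τ := h ▸ hi
        simp only [Finset.mem_filter, Finset.mem_univ, true_and] at this
        exact Set.mem_Ioi.mpr (not_le.mp this)
  -- measure of events
  have hPE : ∀ S : Finset (Fin n), (P (E S)).toReal = p ^ S.card * q ^ (n - S.card) := by
    intro S
    have h := hindep.measure_inter_preimage_eq_mul (univ : Finset (Fin n))
      (sets := fun i => if i ∈ S then Set.Iic τ else Set.Ioi τ)
      (fun i _ => by split_ifs <;> [exact measurableSet_Iic; exact measurableSet_Ioi])
    rw [hE, h, ENNReal.toReal_prod]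
    have : ∀ i : Fin n, (P (X i ⁻¹' (if i ∈ S then Set.Iic τ else Set.Ioi τ))).toReal
        = if i ∈ S then p else q := by
      intro i
      by_cases hi : i ∈ S
      · rw [if_pos hi, if_pos hi, hp i]
      · rw [if_neg hi, if_neg hi, hq i]
    rw [Finset.prod_congr rfl fun i _ => this i, Finset.prod_ite (fun _ => p) (fun _ => q),
      Finset.prod_const, Finset.prod_const, Finset.filter_univ_mem, Finset.filter_not,
      Finset.filter_univ_mem, Finset.card_sdiff_of_subset (Finset.subset_univ S), Finset.card_univ,
      Fintype.card_fin]
  -- null measurability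
  have hEnm : ∀ S : Finset (Fin n), NullMeasurableSet (E S) P := by
    intro S
    refine NullMeasurableSet.biInter (Finset.countable_toSet _) fun i _ => ?_
    exact (hAE i).nullMeasurable (by split_ifs <;> [exact measurableSet_Iic;
      exact measurableSet_Ioi])
  set T : Finset (Fin n) → Set Ω := fun S => MeasureTheory.toMeasurable P (E S) with hT
  have hTae : ∀ S, T S =ᵐ[P] E S := fun S => (hEnm S).toMeasurable_ae_eq
  -- pointwise representation
  have hrep : ∀ ω, ((min ((univ.filter fun i => X i ω ≤ τ)).card r : ℕ) : ℝ)
      = ∑ S : Finset (Fin n),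
          Set.indicator (E S) (fun _ => ((min S.card r : ℕ) : ℝ)) ω := by
    intro ω
    rw [Finset.sum_eq_single (univ.filter fun i => X i ω ≤ τ)]
    · rw [Set.indicator_of_mem ((mem_E _ _).mpr rfl)]
    · intro S _ hS
      exact Set.indicator_of_notMem (fun h => hS (((mem_E S ω).mp h).symm)) _
    · intro h
      exact absurd (Finset.mem_univ _) h
  -- integral computation
  have step1 : ∫ ω, ((min ((univ.filter fun i => X i ω ≤ τ)).card r : ℕ) : ℝ) ∂P
      = ∫ ω, (∑ S : Finset (Fin n),
          Set.indicator (T S) (fun _ => ((min S.card r : ℕ) : ℝ)) ω) ∂P := by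
    refine integral_congr_ae ?_
    have h1 : (fun ω => ((min ((univ.filter fun i => X i ω ≤ τ)).card r : ℕ) : ℝ))
        = fun ω => ∑ S : Finset (Fin n),
            Set.indicator (E S) (fun _ => ((min S.card r : ℕ) : ℝ)) ω := funext hrep
    rw [h1]
    have hae : ∀ᵐ ω ∂P, ∀ S : Finset (Fin n),
        Set.indicator (E S) (fun _ => ((min S.card r : ℕ) : ℝ)) ω
          = Set.indicator (T S) (fun _ => ((min S.card r : ℕ) : ℝ)) ω := by
      rw [ae_all_iff]
      exact fun S => (indicator_ae_eq_of_ae_eq_set (hTae S)).symm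
    filter_upwards [hae] with ω h
    exact Finset.sum_congr rfl fun S _ => h S
  rw [step1, integral_finset_sum _
    (fun S _ => (integrable_const _).indicator (measurableSet_toMeasurable _ _))]
  have step2 : ∀ S : Finset (Fin n),
      ∫ ω, Set.indicator (T S) (fun _ => ((min S.card r : ℕ) : ℝ)) ω ∂P
        = ((min S.card r : ℕ) : ℝ) * p ^ S.card * q ^ (n - S.card) := by
    intro S
    rw [integral_indicator_const _ (measurableSet_toMeasurable _ _)]
    rw [measureReal_def, show P (toMeasurable P (E S)) = P (E S) from measure_toMeasurable _, smul_eq_mul, hPE S]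
    ring
  rw [Finset.sum_congr rfl fun S _ => step2 S]
  have := Finset.sum_powerset_apply_card
    (fun m => ((min m r : ℕ) : ℝ) * p ^ m * q ^ (n - m)) (x := (univ : Finset (Fin n)))
  rw [← Finset.powerset_univ, this, Finset.card_univ, Fintype.card_fin]
  refine Finset.sum_congr rfl fun m hm => ?_
  rw [nsmul_eq_mul]
  ring


/-- The prior-averaged expected number of observed failures under
Type-I hybrid censoring: `∫₀^∞ π(λ; a, b) E_λ[min(N, r)] dλ` equals the stated
double-sum expression. -/
theorem prior_expected_failures_hybrid
    {Ω : Type*} [MeasurableSpace Ω] (P : ℝ → Measure Ω)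
    (hP : ∀ l, 0 < l → IsProbabilityMeasure (P l))
    (n r : ℕ) (hr : 1 ≤ r) (hrn : r ≤ n) (τ : ℝ) (hτ : 0 < τ)
    (X : Fin n → Ω → ℝ)
    (hindep : ∀ l, 0 < l → iIndepFun X (P l))
    (hdist : ∀ l, 0 < l → ∀ i, Measure.map (X i) (P l) = expMeasure l)
    (a b : ℝ) (ha : 0 < a) (hb : 0 < b)
    (N : Ω → ℕ) (hN : ∀ ω, N ω = (univ.filter (fun i => X i ω ≤ τ)).card) :
    (∫ l in Set.Ioi (0:ℝ), gammaPdf a b l * (∫ ω, (min (N ω) r : ℕ) ∂(P l) : ℝ))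
      = (∑ m ∈ Icc 1 (r - 1), ∑ j ∈ range (m + 1),
          (m : ℝ) * (n.choose m : ℝ) * (m.choose j : ℝ) * (-1 : ℝ) ^ j
            * b ^ a / (b + ((n : ℝ) - m + j) * τ) ^ a)
        + ∑ k ∈ Icc r n, ∑ j ∈ range (k + 1),
            (r : ℝ) * (n.choose k : ℝ) * (k.choose j : ℝ) * (-1 : ℝ) ^ j
              * b ^ a / (b + ((n : ℝ) - k + j) * τ) ^ a := by
  classical
  -- inner expectation
  have key : ∀ l : ℝ, 0 < l → (∫ ω, (min (N ω) r : ℕ) ∂(P l) : ℝ)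
      = ∑ m ∈ range (n + 1), ((min m r : ℕ) : ℝ) * (n.choose m : ℝ)
          * (1 - Real.exp (-(l * τ))) ^ m * (Real.exp (-(l * τ))) ^ (n - m) := by
    intro l hl
    haveI := hP l hl
    haveI := isProbabilityMeasure_expMeasure hl
    have hAE : ∀ i, AEMeasurable (X i) (P l) := by
      intro i
      by_contra h
      have h0 := Measure.map_of_not_aemeasurable h
      rw [hdist l hl i] at h0
      exact IsProbabilityMeasure.ne_zero (expMeasure l) h0
    have hp : ∀ i, ((P l) (X i ⁻¹' Set.Iic τ)).toReal = 1 - Real.exp (-(l * τ)) := by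
      intro i
      rw [← Measure.map_apply_of_aemeasurable (hAE i) measurableSet_Iic, hdist l hl i]
      have h1 := cdf_expMeasure_eq hl τ
      rw [cdf_eq_real, measureReal_def, if_pos hτ.le] at h1
      exact h1
    have hq : ∀ i, ((P l) (X i ⁻¹' Set.Ioi τ)).toReal = Real.exp (-(l * τ)) := by
      intro i
      have hc : X i ⁻¹' Set.Ioi τ = (X i ⁻¹' Set.Iic τ)ᶜ := by
        rw [← Set.preimage_compl, Set.compl_Iic]
      rw [hc, measure_compl₀ ((hAE i).nullMeasurable measurableSet_Iic) (measure_ne_top _ _),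
        measure_univ, ENNReal.toReal_sub_of_le prob_le_one ENNReal.one_ne_top,
        ENNReal.toReal_one, hp i]
      ring
    simp only [hN]
    exact expectation_min_eq (P l) X (hindep l hl) hAE τ _ _ hp hq r
  -- rewrite integrand
  have hmain : ∀ l ∈ Set.Ioi (0:ℝ),
      gammaPdf a b l * (∫ ω, (min (N ω) r : ℕ) ∂(P l) : ℝ)
        = (∑ m ∈ Icc 1 (r - 1), ∑ j ∈ range (m + 1),
            ((m : ℝ) * (n.choose m : ℝ) * (m.choose j : ℝ) * (-1 : ℝ) ^ j)
              * (gammaPdf a b l * Real.exp (-((((n : ℝ) - m + j) * τ) * l))))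
          + ∑ k ∈ Icc r n, ∑ j ∈ range (k + 1),
              ((r : ℝ) * (n.choose k : ℝ) * (k.choose j : ℝ) * (-1 : ℝ) ^ j)
                * (gammaPdf a b l * Real.exp (-((((n : ℝ) - k + j) * τ) * l))) := by
    intro l hl
    rw [key l hl, alg_split hr hrn, mul_add, Finset.mul_sum, Finset.mul_sum]
    have hexp : ∀ m j : ℕ, m ≤ n →
        (Real.exp (-(l * τ))) ^ (n - m + j) = Real.exp (-((((n : ℝ) - m + j) * τ) * l)) := by
      intro m j hmn
      rw [← Real.exp_nat_mul]
      congr 1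
      push_cast [Nat.cast_sub hmn]
      ring
    congr 1
    · refine Finset.sum_congr rfl fun m hm => ?_
      rw [Finset.mul_sum]
      refine Finset.sum_congr rfl fun j hj => ?_
      rw [Finset.mem_Icc] at hm
      rw [hexp m j (by omega)]
      ring
    · refine Finset.sum_congr rfl fun k hk => ?_
      rw [Finset.mul_sum]
      refine Finset.sum_congr rfl fun j hj => ?_
      rw [Finset.mem_Icc] at hk
      rw [hexp k j (by omega)]
      ring
  rw [setIntegral_congr_fun measurableSet_Ioi hmain]
  have hcnn : ∀ m j : ℕ, m ≤ n → (0:ℝ) ≤ ((n : ℝ) - m + j) * τ := by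
    intro m j hmn
    have h1 : (m : ℝ) ≤ (n : ℝ) := Nat.cast_le.mpr hmn
    have h2 : (0:ℝ) ≤ (j : ℝ) := Nat.cast_nonneg j
    nlinarith
  have hint : ∀ (C : ℝ) (m j : ℕ), m ≤ n → IntegrableOn
      (fun l => C * (gammaPdf a b l * Real.exp (-((((n : ℝ) - m + j) * τ) * l))))
      (Set.Ioi (0:ℝ)) :=
    fun C m j hmn => (integrableOn_gamma_exp ha hb (hcnn m j hmn)).const_mul C
  have hint1 : IntegrableOn (fun l => ∑ m ∈ Icc 1 (r - 1), ∑ j ∈ range (m + 1),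
      ((m : ℝ) * (n.choose m : ℝ) * (m.choose j : ℝ) * (-1 : ℝ) ^ j)
        * (gammaPdf a b l * Real.exp (-((((n : ℝ) - m + j) * τ) * l)))) (Set.Ioi (0:ℝ)) := by
    refine integrable_finset_sum _ fun m hm => integrable_finset_sum _ fun j hj => ?_
    rw [Finset.mem_Icc] at hm
    exact hint _ m j (by omega)
  have hint2 : IntegrableOn (fun l => ∑ k ∈ Icc r n, ∑ j ∈ range (k + 1),
      ((r : ℝ) * (n.choose k : ℝ) * (k.choose j : ℝ) * (-1 : ℝ) ^ j)
        * (gammaPdf a b l * Real.exp (-((((n : ℝ) - k + j) * τ) * l)))) (Set.Ioi (0:ℝ)) := by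
    refine integrable_finset_sum _ fun k hk => integrable_finset_sum _ fun j hj => ?_
    rw [Finset.mem_Icc] at hk
    exact hint _ k j (by omega)
  rw [integral_add hint1 hint2]
  congr 1
  · rw [integral_finset_sum _ (fun m hm => integrable_finset_sum _ fun j hj => by
      rw [Finset.mem_Icc] at hm; exact hint _ m j (by omega))]
    refine Finset.sum_congr rfl fun m hm => ?_
    rw [Finset.mem_Icc] at hm
    rw [integral_finset_sum _ (fun j hj => hint _ m j (by omega))]
    refine Finset.sum_congr rfl fun j hj => ?_
    rw [integral_const_mul, integral_gamma_exp ha hb (hcnn m j (by omega))]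
    ring
  · rw [integral_finset_sum _ (fun k hk => integrable_finset_sum _ fun j hj => by
      rw [Finset.mem_Icc] at hk; exact hint _ k j (by omega))]
    refine Finset.sum_congr rfl fun k hk => ?_
    rw [Finset.mem_Icc] at hk
    rw [integral_finset_sum _ (fun j hj => hint _ k j (by omega))]
    refine Finset.sum_congr rfl fun j hj => ?_
    rw [integral_const_mul, integral_gamma_exp ha hb (hcnn k j (by omega))]
    ring
end

section
/- Let a > 0, b > 0, an integer m ≥ 0, an integer k ≥ 1, a₀ ≥ 0, a₁,…,a_k > 0 and C_r > a₀. Define h₁(z) = a₀ + ∑_{j=1}^{k} a_j (m+a)(m+a+1)⋯(m+a+j−1)/(z+b)^j for z ≥ 0. Then h₁ is strictly decreasing on [0, ∞) with limit a₀ as z → ∞, and there exists t ≥ 0 such that {z ≥ 0 : h₁(z) ≤ C_r} = [t, ∞); in particular the region is nonempty and is an upper ray. -/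
open Finset

/-- The posterior expected acceptance cost
`h₁(z) = a₀ + ∑_{j=1}^{k} a_j (m+a)(m+a+1)⋯(m+a+j−1)/(z+b)^j` is strictly decreasing on
`[0, ∞)` with limit `a₀` as `z → ∞`, and for `C_r > a₀` the acceptance region
`{z ≥ 0 : h₁(z) ≤ C_r}` is a nonempty upper ray `[t, ∞)`. -/
theorem bayes_decision_threshold_rule
    (a b : ℝ) (ha : 0 < a) (hb : 0 < b) (m : ℕ) (k : ℕ) (hk : 1 ≤ k)
    (acoef : ℕ → ℝ) (ha0 : 0 ≤ acoef 0)
    (hapos : ∀ j, 1 ≤ j → j ≤ k → 0 < acoef j)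
    (Cr : ℝ) (hCr : acoef 0 < Cr)
    (h₁ : ℝ → ℝ)
    (hh₁ : ∀ z, h₁ z = acoef 0 + ∑ j ∈ Icc 1 k,
        acoef j * (∏ i ∈ range j, ((m : ℝ) + a + i)) / (z + b) ^ j) :
    StrictAntiOn h₁ (Set.Ici 0)
      ∧ Filter.Tendsto h₁ Filter.atTop (nhds (acoef 0))
      ∧ ∃ t, 0 ≤ t ∧ {z : ℝ | 0 ≤ z ∧ h₁ z ≤ Cr} = Set.Ici t := by
  -- positivity of the ascending factorial products
  have hP : ∀ j : ℕ, 0 < ∏ i ∈ range j, ((m : ℝ) + a + i) := by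
    intro j
    apply Finset.prod_pos
    intro i _
    have : (0:ℝ) ≤ (m:ℝ) + i := by positivity
    linarith
  have hnum : ∀ j, 1 ≤ j → j ≤ k →
      0 < acoef j * ∏ i ∈ range j, ((m : ℝ) + a + i) := by
    intro j h1 h2
    exact mul_pos (hapos j h1 h2) (hP j)
  -- strict antitonicity
  have hanti : StrictAntiOn h₁ (Set.Ici 0) := by
    intro x hx y hy hxy
    rw [hh₁ x, hh₁ y]
    have hxb : 0 < x + b := by have := hx; simp at this; linarith
    have hyb : 0 < y + b := by have := hy; simp at this; linarith
    have hne : (Icc 1 k).Nonempty := ⟨1, by simp [hk]⟩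
    refine (add_lt_add_iff_left _).mpr (Finset.sum_lt_sum_of_nonempty hne ?_)
    intro j hj
    simp only [mem_Icc] at hj
    have hnum' := hnum j hj.1 hj.2
    apply div_lt_div_of_pos_left hnum' (pow_pos hxb j)
    exact pow_lt_pow_left₀ (by linarith) (le_of_lt hxb) (by omega)
  -- limit
  have htend : Filter.Tendsto h₁ Filter.atTop (nhds (acoef 0)) := by
    have hsum : Filter.Tendsto
        (fun z : ℝ => ∑ j ∈ Icc 1 k,
          acoef j * (∏ i ∈ range j, ((m : ℝ) + a + i)) / (z + b) ^ j)
        Filter.atTop (nhds 0) := by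
      have : (0:ℝ) = ∑ j ∈ Icc 1 k, (0:ℝ) := by simp
      rw [this]
      apply tendsto_finset_sum
      intro j hj
      simp only [mem_Icc] at hj
      apply Filter.Tendsto.div_atTop (tendsto_const_nhds)
      have h1 : Filter.Tendsto (fun z : ℝ => z + b) Filter.atTop Filter.atTop :=
        Filter.tendsto_atTop_add_const_right _ _ Filter.tendsto_id
      exact (Filter.tendsto_pow_atTop (by omega : j ≠ 0)).comp h1
    have h2 := hsum.const_add (acoef 0)
    simp only [add_zero] at h2
    exact Filter.Tendsto.congr (fun z => (hh₁ z).symm) h2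
  refine ⟨hanti, htend, ?_⟩
  -- the acceptance region
  set S : Set ℝ := {z : ℝ | 0 ≤ z ∧ h₁ z ≤ Cr} with hS
  have hSne : S.Nonempty := by
    have h1 : ∀ᶠ z in Filter.atTop, h₁ z < Cr :=
      htend.eventually_lt_const hCr
    have h2 : ∀ᶠ z : ℝ in Filter.atTop, 0 ≤ z := Filter.eventually_ge_atTop 0
    obtain ⟨z, hz1, hz2⟩ := (h2.and h1).exists
    exact ⟨z, hz1, le_of_lt hz2⟩
  have hcont : ContinuousOn h₁ (Set.Ici 0) := by
    have : ContinuousOn (fun z : ℝ => acoef 0 + ∑ j ∈ Icc 1 k,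
        acoef j * (∏ i ∈ range j, ((m : ℝ) + a + i)) / (z + b) ^ j)
        (Set.Ici 0) := by
      apply continuousOn_const.add
      apply continuousOn_finset_sum
      intro j hj
      apply continuousOn_const.div
      · exact ((continuous_id.add continuous_const).pow j).continuousOn
      · intro z hz
        have hz0 : (0:ℝ) ≤ z := hz
        have : 0 < z + b := by linarith
        positivity
    exact this.congr (fun z _ => hh₁ z)
  have hSclosed : IsClosed S := by
    have : S = Set.Ici 0 ∩ h₁ ⁻¹' Set.Iic Cr := by
      ext z
      simp only [hS, Set.mem_setOf_eq, Set.mem_inter_iff, Set.mem_Ici,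
        Set.mem_preimage, Set.mem_Iic]
    rw [this]
    exact ContinuousOn.preimage_isClosed_of_isClosed hcont isClosed_Ici isClosed_Iic
  have hbdd : BddBelow S := ⟨0, fun z hz => hz.1⟩
  have htmem : sInf S ∈ S := hSclosed.csInf_mem hSne hbdd
  refine ⟨sInf S, htmem.1, ?_⟩
  ext z
  simp only [Set.mem_Ici, Set.mem_setOf_eq]
  constructor
  · intro hz
    exact csInf_le hbdd hz
  · intro hz
    have hz0 : 0 ≤ z := le_trans htmem.1 hz
    refine ⟨hz0, ?_⟩
    rcases eq_or_lt_of_le hz with h | h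
    · rw [← h]; exact htmem.2
    · exact le_of_lt (lt_of_lt_of_le (hanti htmem.1 hz0 h) htmem.2)
end

section
/- Let n ≥ 1, τ > 0, λ > 0, and let X₁,…,Xₙ be i.i.d. Exponential(λ) with M = #{i : Xᵢ ≤ τ}. Then P(M = 0) = e^{−nλτ}, and for the Type-I censored estimator λ̂ (equal to 0 if M = 0 and to M/(∑_{i=1}^{n} min(Xᵢ, τ)) if M ≥ 1), the distribution function of λ̂ is the mixture P(λ̂ ≤ x) = p·S(x) + (1−p)·H(x), where p = e^{−nλτ}, S(x) = 1 for x ≥ 0 and 0 otherwise, and H(x) = P(λ̂ ≤ x | M ≥ 1) is absolutely continuous with H(x) = 0 for x ≤ 1/(nτ); in particular, conditionally on M ≥ 1, λ̂ > 1/(nτ) almost surely. -/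
open MeasureTheory ProbabilityTheory Real Finset

namespace TypeIAux

noncomputable def Lfn (n : ℕ) (τ : ℝ) (v : Fin n → ℝ) : ℝ :=
  if (univ.filter (fun i => v i ≤ τ)).card = 0 then 0
  else ((univ.filter (fun i => v i ≤ τ)).card : ℝ) / ∑ i, min (v i) τ

lemma measurable_card (n : ℕ) (τ : ℝ) :
    Measurable (fun v : Fin n → ℝ => (univ.filter (fun i => v i ≤ τ)).card) := by
  simp only [Finset.card_filter]
  exact Finset.measurable_sum _ fun i _ =>
    Measurable.ite (measurableSet_le (measurable_pi_apply i) measurable_const)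
      measurable_const measurable_const

lemma measurable_Lfn (n : ℕ) (τ : ℝ) : Measurable (Lfn n τ) := by
  unfold Lfn
  refine Measurable.ite ((measurable_card n τ) (measurableSet_singleton 0)) measurable_const
    (Measurable.div (measurable_from_top.comp (measurable_card n τ))
      (Finset.measurable_sum _ fun i _ => (measurable_pi_apply i).min measurable_const))

lemma volume_preimage_div_null (a c : ℝ) (ha : 0 < a) {B : Set ℝ} (hB0 : volume B = 0) :
    volume {x : ℝ | a / (x + c) ∈ B} = 0 := by
  have hsub : {x : ℝ | a / (x + c) ∈ B} ⊆ (fun y : ℝ => a / y - c) '' (B \ {0}) ∪ {-c} := by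
    intro x hx
    by_cases hxc : x + c = 0
    · right; simp only [Set.mem_singleton_iff]; linarith
    · left
      refine ⟨a / (x + c), ⟨hx, div_ne_zero ha.ne' hxc⟩, ?_⟩
      show a / (a / (x + c)) - c = x
      rw [div_div_eq_mul_div, mul_comm, mul_div_assoc, div_self ha.ne', mul_one,
        add_sub_cancel_right]
  refine measure_mono_null hsub (measure_union_null ?_ (measure_singleton _))
  refine addHaar_image_eq_zero_of_differentiableOn_of_addHaar_eq_zero volume ?_
    (measure_mono_null Set.diff_subset hB0)
  intro y hy
  exact (((differentiableAt_const a).div differentiableAt_id hy.2).sub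
    (differentiableAt_const c)).differentiableWithinAt

lemma expMeasure_ac (r : ℝ) : expMeasure r ≪ (volume : Measure ℝ) := by
  rw [expMeasure, gammaMeasure]; exact withDensity_absolutelyContinuous _ _

lemma expMeasure_apply (r : ℝ) {s : Set ℝ} (hs : MeasurableSet s) :
    expMeasure r s = ∫⁻ x in s, exponentialPDF r x := by
  rw [expMeasure, gammaMeasure, withDensity_apply _ hs]; rfl

lemma expMeasure_Iic (lam τ : ℝ) (hlam : 0 < lam) (hτ : 0 ≤ τ) :
    expMeasure lam (Set.Iic τ) = ENNReal.ofReal (1 - Real.exp (-(lam * τ))) := by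
  rw [expMeasure_apply lam measurableSet_Iic, lintegral_exponentialPDF_eq_antiDeriv hlam τ,
    if_pos hτ]

lemma expMeasure_Ioi (lam τ : ℝ) (hlam : 0 < lam) (hτ : 0 ≤ τ) :
    expMeasure lam (Set.Ioi τ) = ENNReal.ofReal (Real.exp (-(lam * τ))) := by
  haveI := isProbabilityMeasure_expMeasure hlam
  have h := measure_compl (μ := expMeasure lam) measurableSet_Iic (measure_ne_top _ (Set.Iic τ))
  rw [Set.compl_Iic, measure_univ, expMeasure_Iic lam τ hlam hτ] at h
  have he1 : Real.exp (-(lam * τ)) ≤ 1 := by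
    rw [Real.exp_le_one_iff]
    nlinarith
  rw [h, ← ENNReal.ofReal_one, ← ENNReal.ofReal_sub _ (sub_nonneg.2 he1)]
  congr 1
  ring

lemma expMeasure_Iic_zero (lam : ℝ) (hlam : 0 < lam) : expMeasure lam (Set.Iic 0) = 0 := by
  rw [expMeasure_Iic lam 0 hlam le_rfl]
  simp


lemma key (k : ℕ) (lam τ : ℝ) (hlam : 0 < lam) (i₀ : Fin (k+1)) {B : Set ℝ}
    (hB : MeasurableSet B) (hB0 : volume B = 0) :
    Measure.pi (fun _ : Fin (k+1) => expMeasure lam)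
      ({v | v i₀ ≤ τ} ∩ Lfn (k+1) τ ⁻¹' B) = 0 := by
  haveI := isProbabilityMeasure_expMeasure hlam
  set e := MeasurableEquiv.piFinSuccAbove (fun _ : Fin (k+1) => ℝ) i₀ with he
  have hmp := measurePreserving_piFinSuccAbove (fun _ : Fin (k+1) => expMeasure lam) i₀
  set N : Set (Fin (k+1) → ℝ) := {v | v i₀ ≤ τ} ∩ Lfn (k+1) τ ⁻¹' B with hN
  have hNmeas : MeasurableSet N :=
    (measurableSet_le (measurable_pi_apply i₀) measurable_const).inter
      (measurable_Lfn _ τ hB)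
  have hS : MeasurableSet (e.symm ⁻¹' N) := e.symm.measurable hNmeas
  have hμN : Measure.pi (fun _ : Fin (k+1) => expMeasure lam) N
      = ((expMeasure lam).prod (Measure.pi fun _ : Fin k => expMeasure lam)) (e.symm ⁻¹' N) := by
    rw [← hmp.map_eq, Measure.map_apply e.measurable hS]
    congr 1
    ext v
    simp
  rw [hμN, Measure.prod_apply_symm hS]
  have hsec : ∀ w : Fin k → ℝ,
      expMeasure lam ((fun x => (x, w)) ⁻¹' (e.symm ⁻¹' N)) = 0 := by
    intro w
    have hsub : ((fun x : ℝ => (x, w)) ⁻¹' (e.symm ⁻¹' N)) ⊆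
        {x : ℝ | ((1 + (univ.filter (fun j : Fin k => w j ≤ τ)).card : ℕ) : ℝ)
          / (x + ∑ j, min (w j) τ) ∈ B} := by
      intro x hx
      simp only [Set.mem_preimage] at hx
      set v : Fin (k+1) → ℝ := i₀.insertNth x w with hv
      rw [show e.symm (x, w) = v from rfl] at hx
      obtain ⟨hxτ, hLB⟩ := hx
      have hxτ : x ≤ τ := by simpa only [hv, Set.mem_setOf_eq, Fin.insertNth_apply_same] using hxτ
      have hcard : (univ.filter (fun i => v i ≤ τ)).card
          = 1 + (univ.filter (fun j : Fin k => w j ≤ τ)).card := by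
        simp only [Finset.card_filter]
        rw [Fin.sum_univ_succAbove (fun i => if v i ≤ τ then (1:ℕ) else 0) i₀]
        simp [hv, Fin.insertNth_apply_same, Fin.insertNth_apply_succAbove, hxτ]
      have hsum : ∑ i, min (v i) τ = x + ∑ j, min (w j) τ := by
        rw [Fin.sum_univ_succAbove (fun i => min (v i) τ) i₀]
        simp [hv, Fin.insertNth_apply_same, Fin.insertNth_apply_succAbove, min_eq_left hxτ]
      simp only [Set.mem_preimage, Lfn] at hLB
      rw [hcard, hsum, if_neg (by omega)] at hLB
      exact hLB
    refine measure_mono_null hsub (expMeasure_ac lam (volume_preimage_div_null _ _ ?_ hB0))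
    positivity
  rw [lintegral_congr hsec, lintegral_zero]

end TypeIAux

open TypeIAux

/-- Mixture decomposition of the distribution of the Type-I censored
estimator `λ̂`: `P(M = 0) = e^{−nλτ}`, and `P(λ̂ ≤ x) = p·S(x) + (1−p)·H(x)` where
`p = e^{−nλτ}`, `S` is the point-mass-at-0 CDF, and `H(x) = P(λ̂ ≤ x | M ≥ 1)` is
absolutely continuous (it has a density) and vanishes for `x ≤ 1/(nτ)`; in particular,
conditionally on `M ≥ 1`, `λ̂ > 1/(nτ)` almost surely. -/
theorem typeI_estimator_mixture
    {Ω : Type*} [MeasurableSpace Ω] (P : Measure Ω) [IsProbabilityMeasure P]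
    (n : ℕ) (hn : 1 ≤ n) (lam τ : ℝ) (hlam : 0 < lam) (hτ : 0 < τ)
    (X : Fin n → Ω → ℝ)
    (hindep : iIndepFun X P)
    (hdist : ∀ i, Measure.map (X i) P = expMeasure lam)
    (M : Ω → ℕ) (hM : ∀ ω, M ω = (univ.filter (fun i => X i ω ≤ τ)).card)
    (lamHat : Ω → ℝ)
    (hlamHat : ∀ ω, lamHat ω =
      if M ω = 0 then 0 else (M ω : ℝ) / ∑ i, min (X i ω) τ)
    (p : ℝ) (hp : p = Real.exp (-(n * lam * τ)))
    (S : ℝ → ℝ) (hS : ∀ x, S x = if 0 ≤ x then 1 else 0)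
    (H : ℝ → ℝ)
    (hH : ∀ x, H x = (P {ω | lamHat ω ≤ x ∧ 1 ≤ M ω}).toReal / (1 - p)) :
    (P {ω | M ω = 0}).toReal = p
      ∧ (∀ x, (P {ω | lamHat ω ≤ x}).toReal = p * S x + (1 - p) * H x)
      ∧ (∃ h : ℝ → ℝ, ∀ x, H x = ∫ y in Set.Iic x, h y)
      ∧ (∀ x, x ≤ 1 / ((n : ℝ) * τ) → H x = 0)
      ∧ P {ω | 1 ≤ M ω ∧ lamHat ω ≤ 1 / ((n : ℝ) * τ)} = 0 := by
  obtain ⟨k, rfl⟩ : ∃ k, n = k + 1 := ⟨n - 1, (Nat.succ_pred_eq_of_pos hn).symm⟩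
  haveI hprob1 : IsProbabilityMeasure (expMeasure lam) := isProbabilityMeasure_expMeasure hlam
  set μ : Measure (Fin (k+1) → ℝ) := Measure.pi (fun _ => expMeasure lam) with hμd
  haveI : IsProbabilityMeasure μ := by rw [hμd]; infer_instance
  -- a.e.-measurability of the X i
  have hXae : ∀ i, AEMeasurable (X i) P := by
    intro i
    by_contra hc
    have h1 := hdist i
    rw [Measure.map_of_not_aemeasurable hc] at h1
    have h2 : (expMeasure lam) Set.univ = 1 := measure_univ
    rw [← h1] at h2
    simp at h2
  set Y : Ω → (Fin (k+1) → ℝ) := fun ω i => X i ω with hY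
  have hYae : AEMeasurable Y P := by
    refine ⟨fun ω i => (hXae i).mk (X i) ω,
      measurable_pi_iff.2 fun i => (hXae i).measurable_mk, ?_⟩
    have h := ae_all_iff.2 fun i : Fin (k+1) => (hXae i).ae_eq_mk
    filter_upwards [h] with ω hω
    funext i
    exact hω i
  have hmap : Measure.map Y P = μ := by
    rw [hμd]
    refine (Measure.pi_eq (μ := fun _ : Fin (k+1) => expMeasure lam) fun s hs => ?_).symm
    rw [Measure.map_apply_of_aemeasurable hYae (MeasurableSet.univ_pi hs)]
    have hpre : Y ⁻¹' Set.pi Set.univ s = ⋂ i ∈ (univ : Finset (Fin (k+1))), X i ⁻¹' s i := by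
      ext ω; simp [hY, Set.mem_pi]
    rw [hpre, hindep.measure_inter_preimage_eq_mul univ (fun i _ => hs i)]
    refine Finset.prod_congr rfl fun i _ => ?_
    rw [← hdist i, Measure.map_apply_of_aemeasurable (hXae i) (hs i)]
  have htrans : ∀ {s : Set (Fin (k+1) → ℝ)}, MeasurableSet s → P (Y ⁻¹' s) = μ s := by
    intro s hs
    rw [← hmap, Measure.map_apply_of_aemeasurable hYae hs]
  -- pointwise identifications
  have hLY : ∀ ω, lamHat ω = Lfn (k+1) τ (Y ω) := by
    intro ω; rw [hlamHat ω, hM ω]; rfl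
  -- measurable sets
  have hm0meas : MeasurableSet {v : Fin (k+1) → ℝ | (univ.filter (fun i => v i ≤ τ)).card = 0} :=
    measurable_card (k+1) τ (measurableSet_singleton 0)
  have hm1meas : MeasurableSet {v : Fin (k+1) → ℝ | 1 ≤ (univ.filter (fun i => v i ≤ τ)).card} :=
    measurable_card (k+1) τ measurableSet_Ici
  have hLxmeas : ∀ x : ℝ, MeasurableSet {v : Fin (k+1) → ℝ | Lfn (k+1) τ v ≤ x} :=
    fun x => measurable_Lfn (k+1) τ measurableSet_Iic
  -- p facts
  have hNpos : (0:ℝ) < ((k+1 : ℕ) : ℝ) := by exact_mod_cast Nat.succ_pos k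
  have hp0 : (μ {v : Fin (k+1) → ℝ | (univ.filter (fun i => v i ≤ τ)).card = 0}).toReal = p := by
    have hset : {v : Fin (k+1) → ℝ | (univ.filter (fun i => v i ≤ τ)).card = 0}
        = Set.pi Set.univ (fun _ => Set.Ioi τ) := by
      ext v
      simp [Finset.card_eq_zero, Finset.filter_eq_empty_iff, Set.mem_pi, not_le]
    rw [hset, hμd, Measure.pi_pi]
    simp only [expMeasure_Ioi lam τ hlam hτ.le, Finset.prod_const, Finset.card_univ,
      Fintype.card_fin]
    rw [ENNReal.toReal_pow, ENNReal.toReal_ofReal (Real.exp_nonneg _), ← Real.exp_nat_mul, hp]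
    congr 1
    push_cast
    ring
  have hplt : p < 1 := by
    rw [hp]
    calc Real.exp (-(((k+1:ℕ):ℝ) * lam * τ)) < Real.exp 0 := by
          apply Real.exp_lt_exp.2
          have : (0:ℝ) < ((k+1:ℕ):ℝ) * lam * τ := mul_pos (mul_pos hNpos hlam) hτ
          linarith
      _ = 1 := Real.exp_zero
  have h1p : (1:ℝ) - p ≠ 0 := by
    have hppos : 0 < p := by rw [hp]; exact Real.exp_pos _
    intro hcon; linarith
  -- the Lfn is zero when no failures
  have hzero : ∀ v : Fin (k+1) → ℝ, (univ.filter (fun i => v i ≤ τ)).card = 0 →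
      Lfn (k+1) τ v = 0 := fun v h => by rw [Lfn, if_pos h]
  -- the key null set (conjunct 5 core)
  have hkey5 : μ ({v : Fin (k+1) → ℝ | 1 ≤ (univ.filter (fun i => v i ≤ τ)).card}
      ∩ {v | Lfn (k+1) τ v ≤ 1 / (((k+1 : ℕ) : ℝ) * τ)}) = 0 := by
    have hnull : μ ((⋃ i : Fin (k+1), Function.eval i ⁻¹' ({τ} : Set ℝ))
        ∪ ⋃ i : Fin (k+1), Function.eval i ⁻¹' (Set.Iic (0:ℝ))) = 0 := by
      rw [hμd]
      refine measure_union_null (measure_iUnion_null fun i => ?_)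
        (measure_iUnion_null fun i => ?_)
      · exact Measure.pi_eval_preimage_null _ (expMeasure_ac lam (measure_singleton τ))
      · exact Measure.pi_eval_preimage_null _ (expMeasure_Iic_zero lam hlam)
    refine measure_mono_null ?_ hnull
    rintro v ⟨hv1, hvL⟩
    by_contra hnot
    simp only [Set.mem_union, Set.mem_iUnion, Set.mem_preimage, Set.mem_singleton_iff,
      Set.mem_Iic, not_or, not_exists, Function.eval] at hnot
    obtain ⟨hne, hnp⟩ := hnot
    have hpos : ∀ i, 0 < v i := fun i => lt_of_not_ge (hnp i)
    have hm1 : 1 ≤ (univ.filter (fun i => v i ≤ τ)).card := hv1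
    obtain ⟨i₁, hi₁⟩ := Finset.card_pos.1 hm1
    have hvi₁ : v i₁ ≤ τ := (Finset.mem_filter.1 hi₁).2
    have hvi₁' : v i₁ < τ := lt_of_le_of_ne hvi₁ (hne i₁)
    have hTpos : 0 < ∑ i, min (v i) τ :=
      Finset.sum_pos (fun i _ => lt_min (hpos i) hτ) Finset.univ_nonempty
    have hTlt : ∑ i, min (v i) τ < ((k+1 : ℕ) : ℝ) * τ := by
      have h := Finset.sum_lt_sum (s := univ) (f := fun i : Fin (k+1) => min (v i) τ)
        (g := fun _ => τ) (fun i _ => min_le_right _ _)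
        ⟨i₁, Finset.mem_univ i₁, by show min (v i₁) τ < τ; rw [min_eq_left hvi₁]; exact hvi₁'⟩
      simpa [Finset.sum_const, Finset.card_univ, nsmul_eq_mul] using h
    have hnτ : 0 < ((k+1:ℕ) : ℝ) * τ := mul_pos hNpos hτ
    have hvL' := hvL
    simp only [Set.mem_setOf_eq, Lfn] at hvL'
    rw [if_neg (by omega), div_le_div_iff₀ hTpos hnτ] at hvL'
    have hc1 : (1:ℝ) ≤ ((univ.filter (fun i => v i ≤ τ)).card : ℝ) := by exact_mod_cast hm1
    have hmul : ((k+1:ℕ):ℝ) * τ ≤ ((univ.filter (fun i => v i ≤ τ)).card : ℝ) * (((k+1:ℕ):ℝ) * τ) := by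
      nlinarith
    linarith
  -- set identifications
  have hnum : ∀ x : ℝ, {ω | lamHat ω ≤ x ∧ 1 ≤ M ω}
      = Y ⁻¹' ({v : Fin (k+1) → ℝ | Lfn (k+1) τ v ≤ x}
          ∩ {v | 1 ≤ (univ.filter (fun i => v i ≤ τ)).card}) := by
    intro x
    ext ω
    simp only [Set.mem_setOf_eq, Set.mem_preimage, Set.mem_inter_iff, hLY, hM, hY]
  refine ⟨?_, fun x => ?_, ?_, fun x hx => ?_, ?_⟩
  · -- P(M = 0) = p
    have hsetM0 : {ω | M ω = 0}
        = Y ⁻¹' {v : Fin (k+1) → ℝ | (univ.filter (fun i => v i ≤ τ)).card = 0} := by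
      ext ω
      simp only [Set.mem_setOf_eq, Set.mem_preimage, hM, hY]
    rw [hsetM0, htrans hm0meas]
    exact hp0
  · -- mixture formula
    have hsetL : {ω | lamHat ω ≤ x} = Y ⁻¹' {v : Fin (k+1) → ℝ | Lfn (k+1) τ v ≤ x} := by
      ext ω
      simp only [Set.mem_setOf_eq, Set.mem_preimage, hLY, hY]
    rw [hsetL, htrans (hLxmeas x)]
    have hsplit : μ {v : Fin (k+1) → ℝ | Lfn (k+1) τ v ≤ x}
        = μ ({v | Lfn (k+1) τ v ≤ x} ∩ {v | (univ.filter (fun i => v i ≤ τ)).card = 0})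
          + μ ({v | Lfn (k+1) τ v ≤ x} ∩ {v | 1 ≤ (univ.filter (fun i => v i ≤ τ)).card}) := by
      have hdiff : {v : Fin (k+1) → ℝ | Lfn (k+1) τ v ≤ x}
          \ {v | (univ.filter (fun i => v i ≤ τ)).card = 0}
          = {v | Lfn (k+1) τ v ≤ x} ∩ {v | 1 ≤ (univ.filter (fun i => v i ≤ τ)).card} := by
        ext v
        simp [Set.mem_diff, Nat.one_le_iff_ne_zero]
      rw [← measure_inter_add_diff {v | Lfn (k+1) τ v ≤ x} hm0meas, hdiff]
    rw [hsplit, ENNReal.toReal_add (measure_ne_top _ _) (measure_ne_top _ _)]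
    have hfirst : (μ ({v : Fin (k+1) → ℝ | Lfn (k+1) τ v ≤ x}
        ∩ {v | (univ.filter (fun i => v i ≤ τ)).card = 0})).toReal = p * S x := by
      by_cases hx0 : 0 ≤ x
      · have hseteq : {v : Fin (k+1) → ℝ | Lfn (k+1) τ v ≤ x}
            ∩ {v | (univ.filter (fun i => v i ≤ τ)).card = 0}
            = {v | (univ.filter (fun i => v i ≤ τ)).card = 0} := by
          ext v
          refine ⟨fun h => h.2, fun h => ⟨?_, h⟩⟩
          simp only [Set.mem_setOf_eq]
          rw [hzero v h]; exact hx0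
        rw [hseteq, hp0, hS x, if_pos hx0, mul_one]
      · have hseteq : {v : Fin (k+1) → ℝ | Lfn (k+1) τ v ≤ x}
            ∩ {v | (univ.filter (fun i => v i ≤ τ)).card = 0} = ∅ := by
          ext v
          simp only [Set.mem_inter_iff, Set.mem_setOf_eq, Set.mem_empty_iff_false, iff_false,
            not_and]
          intro hL h0
          rw [hzero v h0] at hL
          exact hx0 hL
        rw [hseteq, hS x, if_neg hx0, mul_zero]
        simp
    have hsecond : (μ ({v : Fin (k+1) → ℝ | Lfn (k+1) τ v ≤ x}
        ∩ {v | 1 ≤ (univ.filter (fun i => v i ≤ τ)).card})).toReal = (1 - p) * H x := by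
      rw [hH x, hnum x, htrans ((hLxmeas x).inter hm1meas), mul_comm, div_mul_cancel₀ _ h1p]
    rw [hfirst, hsecond]
  · -- density
    set ν : Measure ℝ := Measure.map (Lfn (k+1) τ)
      (μ.restrict {v | 1 ≤ (univ.filter (fun i => v i ≤ τ)).card}) with hνd
    haveI : IsFiniteMeasure ν := by
      rw [hνd]; exact Measure.isFiniteMeasure_map _ _
    have hac : ν ≪ (volume : Measure ℝ) := by
      refine Measure.AbsolutelyContinuous.mk fun B hB hB0 => ?_
      rw [hνd, Measure.map_apply (measurable_Lfn (k+1) τ) hB,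
        Measure.restrict_apply (measurable_Lfn (k+1) τ hB)]
      have hsub : Lfn (k+1) τ ⁻¹' B ∩ {v | 1 ≤ (univ.filter (fun i => v i ≤ τ)).card}
          ⊆ ⋃ i₀ : Fin (k+1), ({v : Fin (k+1) → ℝ | v i₀ ≤ τ} ∩ Lfn (k+1) τ ⁻¹' B) := by
        rintro v ⟨hvB, hv1⟩
        obtain ⟨i, hi⟩ := Finset.card_pos.1 hv1
        exact Set.mem_iUnion.2 ⟨i, (Finset.mem_filter.1 hi).2, hvB⟩
      refine measure_mono_null hsub ?_
      rw [hμd]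
      exact measure_iUnion_null fun i₀ => key k lam τ hlam i₀ hB hB0
    refine ⟨fun y => (ν.rnDeriv volume y).toReal / (1 - p), fun x => ?_⟩
    rw [integral_div, Measure.setIntegral_toReal_rnDeriv hac (Set.Iic x), hH x]
    congr 1
    rw [hnum x, htrans ((hLxmeas x).inter hm1meas), hνd, measureReal_def,
      Measure.map_apply (measurable_Lfn (k+1) τ) measurableSet_Iic,
      Measure.restrict_apply (measurable_Lfn (k+1) τ measurableSet_Iic)]
    rfl
  · -- H vanishes below 1/(nτ)
    rw [hH x]
    have hP0 : P {ω | lamHat ω ≤ x ∧ 1 ≤ M ω} = 0 := by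
      rw [hnum x, htrans ((hLxmeas x).inter hm1meas)]
      refine measure_mono_null ?_ hkey5
      rintro v ⟨hvL, hv1⟩
      exact ⟨hv1, le_trans hvL hx⟩
    rw [hP0]
    simp
  · -- conditional a.s. bound
    have hset5 : {ω | 1 ≤ M ω ∧ lamHat ω ≤ 1 / (((k+1:ℕ):ℝ) * τ)}
        = Y ⁻¹' ({v : Fin (k+1) → ℝ | 1 ≤ (univ.filter (fun i => v i ≤ τ)).card}
            ∩ {v | Lfn (k+1) τ v ≤ 1 / (((k+1:ℕ):ℝ) * τ)}) := by
      ext ω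
      simp only [Set.mem_setOf_eq, Set.mem_preimage, Set.mem_inter_iff, hLY, hM, hY]
    rw [hset5, htrans (hm1meas.inter (hLxmeas _))]
    exact hkey5
end
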